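/- Let l > 0 and C ≥ 0 be real numbers, and let J : (0, l) → ℝ be a function such that s ↦ J(s) + C s is monotone increasing on (0, l). Suppose that there is a Lebesgue-null set E ⊂ (0, l) such that for every s ∈ (0, l) \ E one has, in the extended real numbers, liminf_{δ → 0⁺} (J(s+δ) − J(s))/δ ≥ 0. Then J is monotone increasing on (0, l). -/

import Mathlib

open Real MeasureTheory Filter Set

private lemma stmt_10_key (l C : ℝ) (hl : 0 < l) (hC : 0 ≤ C) (J : ℝ → ℝ)
    (E : Set ℝ) (hE : E ⊆ Set.Ioo 0 l) (hE0 : MeasureTheory.volume E = 0)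
    (h : ∀ s ∈ Set.Ioo 0 l \ E,
      (0 : EReal) ≤
        Filter.liminf (fun δ : ℝ => (((J (s + δ) - J s) / δ : ℝ) : EReal))
          (nhdsWithin 0 (Set.Ioi 0)))
    (a b : ℝ) (ha : a ∈ Set.Ioo 0 l) (hb : b ∈ Set.Ioo 0 l) (hab : a < b)
    (hIcc : Set.Icc a b ⊆ Set.Ioo 0 l)
    (hJd : ∀ x ∈ Set.Icc a b, ∀ y ∈ Set.Icc a b, x ≤ y → -(C * (y - x)) ≤ J y - J x)
    (ε : ℝ) (hε : 0 < ε) :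
    J a ≤ J b + ε * (b - a) + (C + ε) * ε := by
  -- open cover of E with small measure
  obtain ⟨U, hEU, hUopen, hUvol⟩ : ∃ U ⊇ E, IsOpen U ∧ volume U < ENNReal.ofReal ε := by
    apply E.exists_isOpen_lt_of_lt
    rw [hE0]
    exact ENNReal.ofReal_pos.2 hε
  have hUfin : volume U ≠ ⊤ := hUvol.ne_top
  set m : ℝ → ℝ := fun x => (volume (U ∩ Icc a x)).toReal with hm
  have hmfin : ∀ x, volume (U ∩ Icc a x) ≠ ⊤ :=
    fun x => (lt_of_le_of_lt (measure_mono inter_subset_left) hUvol).ne_top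
  have hmmono : ∀ x y, x ≤ y → m x ≤ m y := by
    intro x y hxy
    apply ENNReal.toReal_mono (hmfin y)
    exact measure_mono (inter_subset_inter_right _ (Icc_subset_Icc le_rfl hxy))
  have hmstep : ∀ x δ, a ≤ x → 0 < δ → Ioc x (x + δ) ⊆ U → m x + δ ≤ m (x + δ) := by
    intro x δ hax hδ hsub
    have hdisj : Disjoint (U ∩ Icc a x) (Ioc x (x + δ)) := by
      apply Set.disjoint_left.2
      rintro y ⟨-, -, hy2⟩ ⟨hy3, -⟩
      exact absurd hy2 (not_le.2 hy3)
    have hsub2 : (U ∩ Icc a x) ∪ Ioc x (x + δ) ⊆ U ∩ Icc a (x + δ) := by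
      rintro y (⟨hyU, hy1, hy2⟩ | hy)
      · exact ⟨hyU, hy1, hy2.trans (by linarith)⟩
      · exact ⟨hsub hy, le_trans hax hy.1.le, hy.2⟩
    have hvol : volume (U ∩ Icc a x) + ENNReal.ofReal δ ≤ volume (U ∩ Icc a (x + δ)) := by
      have := measure_mono (μ := volume) hsub2
      rwa [measure_union hdisj measurableSet_Ioc, Real.volume_Ioc,
        show x + δ - x = δ by ring] at this
    have := ENNReal.toReal_mono (hmfin _) hvol
    rwa [ENNReal.toReal_add (hmfin x) (by simp), ENNReal.toReal_ofReal hδ.le] at this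
  set φ : ℝ → ℝ := fun x => J x + ε * x + (C + ε) * m x with hφ
  set S : Set ℝ := {x ∈ Icc a b | φ a ≤ φ x} with hS
  have haS : a ∈ S := ⟨⟨le_rfl, hab.le⟩, le_rfl⟩
  have hSbdd : BddAbove S := ⟨b, fun x hx => hx.1.2⟩
  set t := sSup S with ht
  have htmem : t ∈ Icc a b := ⟨le_csSup hSbdd haS, csSup_le ⟨a, haS⟩ (fun x hx => hx.1.2)⟩
  -- φ a ≤ φ t
  have hφdiff : ∀ x ∈ Icc a b, ∀ y ∈ Icc a b, x ≤ y → φ x - C * (y - x) ≤ φ y := by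
    intro x hx y hy hxy
    have h1 := hJd x hx y hy hxy
    have h2 := hmmono x y hxy
    have h3 : 0 ≤ (C + ε) * (m y - m x) := by nlinarith
    simp only [hφ]
    nlinarith
  have htS : φ a ≤ φ t := by
    have : ∀ η > (0:ℝ), φ a ≤ φ t + (C + 1) * η := by
      intro η hη
      obtain ⟨s, hsS, hst⟩ := exists_lt_of_lt_csSup ⟨a, haS⟩ (by linarith : t - η < t)
      have hs_le : s ≤ t := le_csSup hSbdd hsS
      have := hφdiff s hsS.1 t htmem hs_le
      have hCη : C * (t - s) ≤ (C + 1) * η := by nlinarith [hsS.1.1]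
      linarith [hsS.2]
    by_contra hcon
    push_neg at hcon
    obtain ⟨η, hη, hη2⟩ : ∃ η > (0:ℝ), (C+1) * η < φ a - φ t := by
      refine ⟨(φ a - φ t) / (2 * (C + 1)), div_pos (by linarith) (by positivity), ?_⟩
      rw [mul_div_assoc']
      rw [div_lt_iff₀ (by positivity)]
      nlinarith
    linarith [this η hη]
  -- t = b
  have htb : t = b := by
    by_contra hne
    have htlt : t < b := lt_of_le_of_ne htmem.2 hne
    -- find x' > t in S
    have : ∃ x', t < x' ∧ x' ∈ S := by
      by_cases htE : t ∈ E
      · -- t ∈ U, open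
        obtain ⟨δ₀, hδ₀, hball⟩ := Metric.isOpen_iff.1 hUopen t (hEU htE)
        set δ := min (δ₀ / 2) (b - t) with hδdef
        have hδpos : 0 < δ := lt_min (by linarith) (by linarith)
        have hxb : t + δ ≤ b := by
          have := min_le_right (δ₀/2) (b - t); simp only [hδdef]; linarith
        have hsub : Ioc t (t + δ) ⊆ U := by
          intro y hy
          apply hball
          rw [Metric.mem_ball, Real.dist_eq, abs_lt]
          have h1 := min_le_left (δ₀/2) (b - t)
          constructor <;> [linarith [hy.1]; linarith [hy.2]]
        have hstep := hmstep t δ htmem.1 hδpos hsub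
        have hJt := hJd t htmem (t + δ) ⟨by linarith [htmem.1], hxb⟩ (by linarith)
        refine ⟨t + δ, by linarith, ⟨⟨by linarith [htmem.1], hxb⟩, ?_⟩⟩
        have : φ t ≤ φ (t + δ) := by
          simp only [hφ]
          nlinarith
        linarith
      · -- use liminf hypothesis
        have hlim := h t ⟨hIcc htmem, htE⟩
        have hev : ∀ᶠ δ in nhdsWithin (0:ℝ) (Ioi 0),
            ((-ε : ℝ) : EReal) < (((J (t + δ) - J t) / δ : ℝ) : EReal) := by
          apply Filter.eventually_lt_of_lt_liminf
          · refine lt_of_lt_of_le ?_ hlim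
            exact_mod_cast (by linarith : (-ε : ℝ) < 0)
          · exact isBoundedUnder_of ⟨⊥, fun x => bot_le⟩
        have hev2 : ∀ᶠ δ in nhdsWithin (0:ℝ) (Ioi 0), δ < b - t := by
          apply eventually_nhdsWithin_of_eventually_nhds
          exact Filter.Tendsto.eventually_lt_const (by linarith) tendsto_id
        have hev3 : ∀ᶠ δ in nhdsWithin (0:ℝ) (Ioi 0), δ ∈ Ioi (0:ℝ) :=
          eventually_mem_nhdsWithin
        obtain ⟨δ, h1, h2, h3⟩ := (hev.and (hev2.and hev3)).exists
        have hδpos : (0:ℝ) < δ := h3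
        have hq : -ε < (J (t + δ) - J t) / δ := by exact_mod_cast h1
        have hJt : -(ε * δ) < J (t + δ) - J t := by
          have := (lt_div_iff₀ hδpos).1 hq
          linarith
        refine ⟨t + δ, by linarith, ⟨⟨by linarith [htmem.1], by linarith⟩, ?_⟩⟩
        have hmm := hmmono t (t + δ) (by linarith)
        have : φ t ≤ φ (t + δ) := by
          simp only [hφ]
          nlinarith
        linarith
    obtain ⟨x', hx'1, hx'2⟩ := this
    exact absurd (le_csSup hSbdd hx'2) (not_le.2 hx'1)
  -- conclude
  have hbS : φ a ≤ φ b := htb ▸ htS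
  have hma : m a = 0 := by
    simp only [hm, Icc_self]
    have : volume (U ∩ {a}) = 0 :=
      le_antisymm (le_trans (measure_mono inter_subset_right) (by simp)) zero_le
    simp [this]
  have hmb : m b ≤ ε := by
    have h1 : volume (U ∩ Icc a b) ≤ ENNReal.ofReal ε := le_trans (measure_mono inter_subset_left) hUvol.le
    calc m b ≤ (ENNReal.ofReal ε).toReal := ENNReal.toReal_mono (by simp) h1
    _ = ε := ENNReal.toReal_ofReal hε.le
  simp only [hφ, hma] at hbS
  nlinarith


/-- Let `l > 0` and `C ≥ 0` be real numbers, and let `J : (0, l) → ℝ` be a function such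
that `s ↦ J(s) + C s` is monotone increasing on `(0, l)`. Suppose that there is a
Lebesgue-null set `E ⊆ (0, l)` such that for every `s ∈ (0, l) \ E` one has, in the
extended real numbers, `liminf_{δ → 0⁺} (J(s+δ) - J(s))/δ ≥ 0`. Then `J` is monotone
increasing on `(0, l)`. -/
theorem stmt_10 (l C : ℝ) (hl : 0 < l) (hC : 0 ≤ C) (J : ℝ → ℝ)
    (hmono : MonotoneOn (fun s => J s + C * s) (Set.Ioo 0 l))
    (E : Set ℝ) (hE : E ⊆ Set.Ioo 0 l) (hE0 : MeasureTheory.volume E = 0)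
    (h : ∀ s ∈ Set.Ioo 0 l \ E,
      (0 : EReal) ≤
        Filter.liminf (fun δ : ℝ => (((J (s + δ) - J s) / δ : ℝ) : EReal))
          (nhdsWithin 0 (Set.Ioi 0))) :
    MonotoneOn J (Set.Ioo 0 l) := by
  intro a ha b hb hab
  rcases eq_or_lt_of_le hab with rfl | hab
  · exact le_refl _
  have hIcc : Icc a b ⊆ Ioo 0 l := fun x hx => ⟨lt_of_lt_of_le ha.1 hx.1, lt_of_le_of_lt hx.2 hb.2⟩
  have hJd : ∀ x ∈ Icc a b, ∀ y ∈ Icc a b, x ≤ y → -(C * (y - x)) ≤ J y - J x := by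
    intro x hx y hy hxy
    have := hmono (hIcc hx) (hIcc hy) hxy
    simp only at this
    nlinarith
  have key : ∀ ε > (0:ℝ), J a ≤ J b + ε * (b - a) + (C + ε) * ε :=
    fun ε hε => stmt_10_key l C hl hC J E hE hE0 h a b ha hb hab hIcc hJd ε hε
  have htend : Tendsto (fun ε : ℝ => J b + ε * (b - a) + (C + ε) * ε) (nhdsWithin 0 (Ioi 0)) (nhds (J b)) := by
    have : ContinuousAt (fun ε : ℝ => J b + ε * (b - a) + (C + ε) * ε) 0 := by fun_prop
    have h2 := this.tendsto.mono_left (nhdsWithin_le_nhds (s := Ioi 0))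
    simpa using h2
  exact ge_of_tendsto htend (eventually_nhdsWithin_of_forall (fun ε hε => key ε hε))
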